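/- Let n ≥ 1, a < x, and suppose f is (n+1)-times continuously differentiable on a neighborhood of [a, x], and φ satisfies φ(0) = 0, φ'(0) = 1, and φ^(k)(0) = 0 for 2 ≤ k ≤ n, with φ (n+1)-times continuously differentiable. Then f(x) = ∑_{k=0}^{n} (f^(k)(a)/k!) (φ(x-a))^k + e_n(x) (φ(x-a))^n, where e_n(x) = O(x - a) as x → a. -/

import Mathlib

open Filter Asymptotics Topology


lemma myIteratedDeriv_pow (k : ℕ) : ∀ j : ℕ,
    iteratedDeriv j (fun t : ℝ => t ^ k) = fun t => (k.descFactorial j : ℝ) * t ^ (k - j) := by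
  intro j
  induction j with
  | zero => simp
  | succ j ih =>
    rw [iteratedDeriv_succ, ih]
    funext t
    rw [deriv_const_mul _ ((differentiable_pow _).differentiableAt), deriv_pow_field,
      Nat.descFactorial_succ, Nat.cast_mul, Nat.sub_sub]
    ring

lemma myIteratedDeriv_sum {ι : Type*} (u : Finset ι) (F : ι → ℝ → ℝ) (j : ℕ)
    (h : ∀ i ∈ u, ContDiff ℝ j (F i)) (x : ℝ) :
    iteratedDeriv j (fun t => ∑ i ∈ u, F i t) x = ∑ i ∈ u, iteratedDeriv j (F i) x := by
  simp only [iteratedDeriv_eq_iteratedFDeriv]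
  rw [show (fun t => ∑ i ∈ u, F i t) = (∑ i ∈ u, F i ·) from rfl, iteratedFDeriv_sum h]
  simp

lemma myIteratedDeriv_sub {j : ℕ} {f g : ℝ → ℝ} (hf : ContDiff ℝ j f) (hg : ContDiff ℝ j g)
    (x : ℝ) :
    iteratedDeriv j (fun t => f t - g t) x = iteratedDeriv j f x - iteratedDeriv j g x := by
  have := iteratedDerivWithin_sub (Set.mem_univ x) uniqueDiffOn_univ
    hf.contDiffWithinAt hg.contDiffWithinAt
  simpa [iteratedDerivWithin_univ, Pi.sub_def] using this

/-- A `C^m` function whose derivatives of order `< m` all vanish at `0` is `O(t^m)`. -/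
lemma bigO_of_derivs_zero : ∀ (m : ℕ) (h : ℝ → ℝ), ContDiff ℝ m h →
    (∀ j < m, iteratedDeriv j h 0 = 0) → h =O[𝓝 (0:ℝ)] fun t => t ^ m := by
  intro m
  induction m with
  | zero =>
    intro h hh _
    simpa using (hh.continuous.continuousAt (x := (0:ℝ))).isBigO_one ℝ
  | succ m ih =>
    intro h hh hz
    have hh' : ContDiff ℝ (m + 1 : ℕ) h := hh
    rw [show ((m + 1 : ℕ) : WithTop ℕ∞) = (m : WithTop ℕ∞) + 1 by push_cast; ring] at hh'
    have hdiff : Differentiable ℝ h := (contDiff_succ_iff_deriv.mp hh').1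
    have hdh : ContDiff ℝ m (deriv h) := (contDiff_succ_iff_deriv.mp hh').2.2
    have hd : deriv h =O[𝓝 (0:ℝ)] fun t => t ^ m := by
      refine ih (deriv h) hdh fun j hj => ?_
      rw [← iteratedDeriv_succ']
      exact hz (j + 1) (by omega)
    obtain ⟨C, hC⟩ := hd.bound
    rw [Metric.eventually_nhds_iff] at hC
    obtain ⟨δ, hδ, hCδ⟩ := hC
    set C' := max C 0 with hC'
    have hC'0 : 0 ≤ C' := le_max_right _ _
    have hCC' : C ≤ C' := le_max_left _ _
    rw [isBigO_iff]
    refine ⟨C', Metric.eventually_nhds_iff.mpr ⟨δ, hδ, fun {t} ht => ?_⟩⟩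
    have key : ∀ y ∈ Set.uIcc (0:ℝ) t, ‖deriv h y‖ ≤ C' * |t| ^ m := by
      intro y hy
      have hyt : |y| ≤ |t| := by
        rw [Set.uIcc_eq_union] at hy
        rcases hy with hy | hy <;> rcases hy with ⟨h1, h2⟩ <;>
          rw [abs_le] <;> constructor <;> simp at * <;> nlinarith [abs_nonneg t, le_abs_self t, neg_abs_le t]
      have hdy : dist y 0 < δ := by
        rw [Real.dist_eq, sub_zero]
        calc |y| ≤ |t| := hyt
        _ = dist t 0 := by rw [Real.dist_eq, sub_zero]
        _ < δ := ht
      calc ‖deriv h y‖ ≤ C * ‖y ^ m‖ := hCδ hdy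
      _ ≤ C' * |t| ^ m := by
          have h1 : ‖y ^ m‖ = |y| ^ m := by rw [Real.norm_eq_abs, abs_pow]
          have h2 : |y| ^ m ≤ |t| ^ m := pow_le_pow_left₀ (abs_nonneg y) hyt m
          have h3 : (0:ℝ) ≤ |y| ^ m := pow_nonneg (abs_nonneg y) m
          rw [h1]; nlinarith
    have mvt := Convex.norm_image_sub_le_of_norm_deriv_le
      (f := h) (fun y _ => hdiff y) key
      (convex_uIcc (0:ℝ) t) (Set.left_mem_uIcc) (Set.right_mem_uIcc)
    have h0' : h 0 = 0 := hz 0 (by omega)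
    rw [h0', sub_zero, sub_zero] at mvt
    calc ‖h t‖ ≤ C' * |t| ^ m * ‖t‖ := mvt
    _ = C' * ‖t ^ (m + 1)‖ := by
        rw [Real.norm_eq_abs, Real.norm_eq_abs, abs_pow]; ring

lemma myIteratedDeriv_const_mul' {j : ℕ} (c : ℝ) {f : ℝ → ℝ} (hf : ContDiff ℝ j f) (x : ℝ) :
    iteratedDeriv j (fun t => c * f t) x = c * iteratedDeriv j f x := by
  have := iteratedDerivWithin_const_mul (Set.mem_univ x) uniqueDiffOn_univ c hf.contDiffWithinAt
  simpa [iteratedDerivWithin_univ] using this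

/-- nonstandard Taylor theorem, sufficiency direction. -/
theorem nonstandard_taylor_sufficiency (n : ℕ) (hn : 1 ≤ n) (a : ℝ) (f φ : ℝ → ℝ)
    (hf : ContDiff ℝ (n+1) f) (hφs : ContDiff ℝ (n+1) φ)
    (h0 : φ 0 = 0) (h1 : deriv φ 0 = 1)
    (hk : ∀ k, 2 ≤ k → k ≤ n → iteratedDeriv k φ 0 = 0) :
    ∃ e : ℝ → ℝ, (e =O[nhds a] fun x => x - a) ∧
      ∀ᶠ x in nhds a, f x = (∑ k ∈ Finset.range (n+1),
        iteratedDeriv k f a / (Nat.factorial k : ℝ) * (φ (x - a))^k)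
        + e x * (φ (x - a))^n := by
  have hfn : ContDiff ℝ ((n+1 : ℕ) : WithTop ℕ∞) f := by exact_mod_cast hf
  have hφn : ContDiff ℝ ((n+1 : ℕ) : WithTop ℕ∞) φ := by exact_mod_cast hφs
  set c : ℕ → ℝ := fun k => iteratedDeriv k f a / (Nat.factorial k : ℝ) with hc
  set D : ℝ → ℝ := fun t => f (a + t) - ∑ k ∈ Finset.range (n+1), c k * φ t ^ k with hDdef
  -- ψ = φ - id is O(t^(n+1))
  have hψ : (fun t : ℝ => φ t - t) =O[𝓝 (0:ℝ)] fun t => t ^ (n+1) := by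
    refine bigO_of_derivs_zero (n+1) _ (hφn.sub contDiff_id) fun j hj => ?_
    have hjle : ((j : ℕ) : WithTop ℕ∞) ≤ ((n+1 : ℕ) : WithTop ℕ∞) := by
      exact_mod_cast (show j ≤ n+1 by omega)
    rw [myIteratedDeriv_sub (hφn.of_le hjle) (show ContDiff ℝ (j : WithTop ℕ∞) (fun t : ℝ => t) from contDiff_id),
      show (fun t : ℝ => t) = fun t : ℝ => t ^ 1 from funext fun t => (pow_one t).symm,
      myIteratedDeriv_pow]
    rcases j with _ | _ | j
    · simp [h0]
    · simp [iteratedDeriv_one, h1]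
    · rw [hk (j+2) (by omega) (by omega),
        Nat.descFactorial_eq_zero_iff_lt.mpr (by omega)]
      simp
  -- f(a+t) minus its Taylor polynomial is O(t^(n+1))
  have hpolycd : ∀ j : ℕ, ContDiff ℝ (j : WithTop ℕ∞)
      (fun t : ℝ => ∑ k ∈ Finset.range (n+1), c k * t ^ k) :=
    fun j => ContDiff.sum fun k _ => contDiff_const.mul (contDiff_id.pow k)
  have hcompcd : ContDiff ℝ ((n+1 : ℕ) : WithTop ℕ∞) (fun t : ℝ => f (a + t)) :=
    hfn.comp (contDiff_const.add contDiff_id)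
  have h₁O : (fun t : ℝ => f (a + t) - ∑ k ∈ Finset.range (n+1), c k * t ^ k)
      =O[𝓝 (0:ℝ)] fun t => t ^ (n+1) := by
    refine bigO_of_derivs_zero (n+1) _ (hcompcd.sub (hpolycd _)) fun j hj => ?_
    have hjle : ((j : ℕ) : WithTop ℕ∞) ≤ ((n+1 : ℕ) : WithTop ℕ∞) := by
      exact_mod_cast (show j ≤ n+1 by omega)
    rw [myIteratedDeriv_sub (hcompcd.of_le hjle) (hpolycd j),
      iteratedDeriv_comp_const_add j f a,
      myIteratedDeriv_sum (Finset.range (n+1)) (fun k t => c k * t ^ k) j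
        (fun k _ => contDiff_const.mul (contDiff_id.pow k)) 0]
    have hterm : ∀ k, iteratedDeriv j (fun t : ℝ => c k * t ^ k) 0
        = c k * ((k.descFactorial j : ℝ) * (0:ℝ) ^ (k - j)) := by
      intro k
      rw [myIteratedDeriv_const_mul' (f := fun t : ℝ => t ^ k) (c k) (contDiff_id.pow k),
        myIteratedDeriv_pow]
    simp only [hterm]
    rw [Finset.sum_eq_single j (fun k _ hkj => ?_) (fun hj' => absurd
      (Finset.mem_range.mpr (by omega)) hj')]
    · rw [Nat.sub_self, pow_zero, Nat.descFactorial_self, add_zero, hc]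
      field_simp
      simp
    · rcases lt_or_gt_of_ne hkj with hlt | hgt
      · rw [Nat.descFactorial_eq_zero_iff_lt.mpr hlt]; simp
      · rw [zero_pow (by omega : k - j ≠ 0)]; simp
  -- each φ^k - t^k is O(t^(n+1))
  have hGk : ∀ k : ℕ, (fun t : ℝ => φ t ^ k - t ^ k) =O[𝓝 (0:ℝ)] fun t => t ^ (n+1) := by
    intro k
    have hcont : Continuous (fun t : ℝ => ∑ i ∈ Finset.range k, φ t ^ i * t ^ (k - 1 - i)) := by
      apply continuous_finset_sum
      intro i _
      exact (hφs.continuous.pow i).mul (continuous_id.pow _)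
    have hO1 : (fun t : ℝ => ∑ i ∈ Finset.range k, φ t ^ i * t ^ (k - 1 - i))
        =O[𝓝 (0:ℝ)] (fun _ => (1:ℝ)) := hcont.continuousAt.isBigO_one ℝ
    have := hO1.mul hψ
    simpa [geom_sum₂_mul] using this
  -- D is O(t^(n+1))
  have hsumO : (fun t : ℝ => ∑ k ∈ Finset.range (n+1), c k * (φ t ^ k - t ^ k))
      =O[𝓝 (0:ℝ)] fun t => t ^ (n+1) :=
    IsBigO.fun_sum fun k _ => (hGk k).const_mul_left (c k)
  have hD : D =O[𝓝 (0:ℝ)] fun t => t ^ (n+1) := by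
    have := h₁O.sub hsumO
    refine this.congr_left fun t => ?_
    simp only [hDdef, mul_sub, Finset.sum_sub_distrib]
    ring
  have hD0 : D 0 = 0 := by
    have hsum0 : ∑ k ∈ Finset.range (n+1), c k * φ (0:ℝ) ^ k = c 0 := by
      rw [h0, Finset.sum_eq_single 0 (fun k _ hk0 => by rw [zero_pow hk0, mul_zero])
        (fun h => absurd (Finset.mem_range.mpr (by omega)) h)]
      simp
    simp only [hDdef, add_zero, hsum0, hc]
    simp only [hc] at hsum0
    rw [hsum0]
    simp [iteratedDeriv_zero]
  -- φ t is comparable to t near 0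
  have hder : HasDerivAt φ 1 0 := by
    have hd : DifferentiableAt ℝ φ 0 :=
      (hφn.differentiable (by simp)).differentiableAt
    exact h1 ▸ hd.hasDerivAt
  have hslope : Tendsto (fun t : ℝ => φ t / t) (𝓝[≠] (0:ℝ)) (𝓝 1) := by
    have := hasDerivAt_iff_tendsto_slope.mp hder
    refine this.congr' (Filter.Eventually.of_forall fun t => ?_)
    simp [slope_def_field, h0]
  have hhalf : ∀ᶠ t in 𝓝[≠] (0:ℝ), |t| ≤ 2 * |φ t| := by
    filter_upwards [hslope.eventually (eventually_ge_nhds (show (1:ℝ)/2 < 1 by norm_num)),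
      self_mem_nhdsWithin] with t hs ht
    have ht' : t ≠ 0 := ht
    have habs : (1:ℝ)/2 ≤ |φ t| / |t| := by
      rw [← abs_div]; exact le_trans hs (le_abs_self _)
    have htpos : 0 < |t| := abs_pos.mpr ht'
    rw [le_div_iff₀ htpos] at habs
    linarith
  have hhalf' : ∀ᶠ t in 𝓝 (0:ℝ), t ≠ 0 → |t| ≤ 2 * |φ t| := by
    rw [eventually_nhdsWithin_iff] at hhalf
    filter_upwards [hhalf] with t h ht
    exact h (Set.mem_compl_singleton_iff.mpr ht)
  have hten : Tendsto (fun x : ℝ => x - a) (𝓝 a) (𝓝 (0:ℝ)) := by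
    have : Tendsto (fun x : ℝ => x - a) (𝓝 a) (𝓝 (a - a)) :=
      (continuous_id.sub continuous_const).tendsto a
    simpa using this
  refine ⟨fun x => D (x - a) / φ (x - a) ^ n, ?_, ?_⟩
  · -- the big-O bound for e
    obtain ⟨C, hC⟩ := hD.bound
    set C' : ℝ := max C 0 with hC'def
    have hC'0 : 0 ≤ C' := le_max_right _ _
    have hclaim : ∀ᶠ t in 𝓝 (0:ℝ), ‖D t / φ t ^ n‖ ≤ (C' * 2 ^ n) * ‖t‖ := by
      filter_upwards [hC, hhalf'] with t hb hφb
      rcases eq_or_ne t 0 with rfl | ht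
      · simp [hD0]
      · have htle : |t| ≤ 2 * |φ t| := hφb ht
        have htpos : 0 < |t| := abs_pos.mpr ht
        have hφpos : 0 < |φ t| := by linarith
        have hb' : ‖D t‖ ≤ C' * |t| ^ (n+1) := by
          calc ‖D t‖ ≤ C * ‖t ^ (n+1)‖ := hb
          _ ≤ C' * ‖t ^ (n+1)‖ := by
              have : (0:ℝ) ≤ ‖t ^ (n+1)‖ := norm_nonneg _
              nlinarith [le_max_left C 0]
          _ = C' * |t| ^ (n+1) := by rw [Real.norm_eq_abs, abs_pow]
        have hp : |t| ^ n ≤ 2 ^ n * |φ t| ^ n := by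
          calc |t| ^ n ≤ (2 * |φ t|) ^ n := pow_le_pow_left₀ (abs_nonneg t) htle n
          _ = 2 ^ n * |φ t| ^ n := mul_pow _ _ _
        rw [norm_div, norm_pow, Real.norm_eq_abs, Real.norm_eq_abs,
          div_le_iff₀ (pow_pos hφpos n)]
        calc ‖D t‖ ≤ C' * |t| ^ (n+1) := hb'
        _ = C' * (|t| ^ n * |t|) := by rw [pow_succ]
        _ ≤ C' * (2 ^ n * |φ t| ^ n * |t|) := by
            apply mul_le_mul_of_nonneg_left _ hC'0
            exact mul_le_mul_of_nonneg_right hp (abs_nonneg t)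
        _ = C' * 2 ^ n * |t| * |φ t| ^ n := by ring
    rw [isBigO_iff]
    exact ⟨C' * 2 ^ n, hten.eventually hclaim⟩
  · -- the eventual equality
    have hne' : ∀ᶠ t in 𝓝 (0:ℝ), t ≠ 0 → φ t ≠ 0 := by
      filter_upwards [hhalf'] with t h ht hφ0
      have := h ht
      rw [hφ0] at this
      simp at this
      exact ht this
    filter_upwards [hten.eventually hne'] with x hx
    rcases eq_or_ne x a with rfl | hxa
    · have hsum0 : ∑ k ∈ Finset.range (n+1), c k * φ (x - x) ^ k = c 0 := by
        rw [sub_self, h0, Finset.sum_eq_single 0 (fun k _ hk0 => by rw [zero_pow hk0, mul_zero])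
          (fun h => absurd (Finset.mem_range.mpr (by omega)) h)]
        simp
      rw [show (∑ k ∈ Finset.range (n+1),
          iteratedDeriv k f x / (Nat.factorial k : ℝ) * (φ (x - x))^k) = c 0 from hsum0]
      rw [sub_self, h0, zero_pow (by omega : n ≠ 0), mul_zero, add_zero, hc]
      simp [iteratedDeriv_zero]
    · have hφne : φ (x - a) ≠ 0 := hx (sub_ne_zero.mpr hxa)
      have hDx : D (x - a) = f x - ∑ k ∈ Finset.range (n+1), c k * φ (x - a) ^ k := by
        simp only [hDdef, add_sub_cancel]
      rw [show (∑ k ∈ Finset.range (n+1),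
          iteratedDeriv k f a / (Nat.factorial k : ℝ) * (φ (x - a))^k)
          = ∑ k ∈ Finset.range (n+1), c k * φ (x - a) ^ k from rfl,
        hDx, div_mul_cancel₀ _ (pow_ne_zero n hφne)]
      ring
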